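/- Every graph that is a k-leaf power for some k (equivalently, every graph admitting a radial subtree model) is chordal: it has no induced cycle of length at least 4. -/

import Mathlib

open SimpleGraph

/-- A subtree model of `G` on a tree `T`: each vertex gets a nonempty connected
subtree, and subtrees of distinct vertices intersect iff the vertices are adjacent. -/
def IsSubtreeModel {V W : Type*} (G : SimpleGraph V) (T : SimpleGraph W) (S : V → Set W) : Prop :=
  T.IsTree ∧ (∀ v : V, (T.induce (S v)).Connected) ∧
    ∀ u v : V, u ≠ v → ((S u ∩ S v).Nonempty ↔ G.Adj u v)

/-- A radial subtree model: a subtree model whose subtrees are balls with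
centers `c v` and radii `r v`. -/
def IsRSModel {V W : Type*} (G : SimpleGraph V) (T : SimpleGraph W) (c : V → W) (r : V → ℕ) : Prop :=
  IsSubtreeModel G T (fun v => {x | T.dist x (c v) ≤ r v})

/-- A leaf of a tree: a vertex with exactly one neighbor. -/
def IsLeafNode {W : Type*} (T : SimpleGraph W) (x : W) : Prop := ∃! y, T.Adj x y

/-- A `k`-leaf root of `G`: a tree `T` with a bijection `τ` from `V(G)` onto the
leaves of `T` such that distinct vertices are adjacent iff their leaves are at
distance at most `k` in `T`. -/
def IsLeafRoot {V W : Type*} (G : SimpleGraph V) (T : SimpleGraph W) (τ : V → W) (k : ℕ) : Prop :=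
  T.IsTree ∧ Function.Injective τ ∧ (∀ v : V, IsLeafNode T (τ v)) ∧
    (∀ x : W, IsLeafNode T x → ∃ v : V, τ v = x) ∧
    ∀ u v : V, u ≠ v → (G.Adj u v ↔ T.dist (τ u) (τ v) ≤ k)

section Aux

variable {W : Type*} {T : SimpleGraph W}

private lemma aux_dist_add_dist_le {x y z : W} (w : T.Walk x y) (hz : z ∈ w.support) :
    T.dist x z + T.dist z y ≤ w.length := by
  classical
  have h := w.take_spec hz
  have hl : (w.takeUntil z hz).length + (w.dropUntil z hz).length = w.length := by
    rw [← Walk.length_append, h]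
  calc T.dist x z + T.dist z y ≤ (w.takeUntil z hz).length + (w.dropUntil z hz).length :=
        add_le_add (SimpleGraph.dist_le _) (SimpleGraph.dist_le _)
    _ = w.length := hl

private lemma aux_side (hT : T.IsTree) {a a' : W} (h : T.Adj a a') (x : W) :
    (∃ w : T.Walk a x, s(a, a') ∉ w.edges) ∨ ∃ w : T.Walk a' x, s(a, a') ∉ w.edges := by
  obtain ⟨p, hp, -⟩ := hT.1.exists_path_of_dist a x
  cases p with
  | nil => exact Or.inl ⟨Walk.nil, by simp⟩
  | @cons _ y _ h1 q =>
    rw [Walk.cons_isPath_iff] at hp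
    have hq : s(a, a') ∉ q.edges := fun he =>
      hp.2 (Walk.fst_mem_support_of_mem_edges q he)
    by_cases hy : y = a'
    · subst hy; exact Or.inr ⟨q, hq⟩
    · refine Or.inl ⟨Walk.cons h1 q, ?_⟩
      simp only [Walk.edges_cons, List.mem_cons]
      rintro (he | he)
      · rw [Sym2.eq_iff] at he
        rcases he with ⟨-, h2⟩ | ⟨h2, h3⟩
        · exact hy h2.symm
        · exact h.ne (h3.symm)
      · exact hq he

private lemma aux_cross (hT : T.IsTree) {a a' x y : W} (h : T.Adj a a')
    (wa : T.Walk a x) (ha : s(a, a') ∉ wa.edges)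
    (wa' : T.Walk a' y) (ha' : s(a, a') ∉ wa'.edges) :
    T.dist x a + T.dist a y ≤ T.dist x y ∧ T.dist x a' + T.dist a' y ≤ T.dist x y := by
  obtain ⟨w, hw⟩ := hT.1.exists_walk_length_eq_dist x y
  have he : s(a, a') ∈ w.edges := by
    by_contra he
    have hb := isAcyclic_iff_forall_adj_isBridge.mp hT.2 h
    rw [isBridge_iff_adj_and_forall_walk_mem_edges] at hb
    have hm := hb (wa.append (w.append wa'.reverse))
    simp only [Walk.edges_append, Walk.edges_reverse, List.mem_append, List.mem_reverse] at hm
    tauto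
  constructor
  · exact hw ▸ aux_dist_add_dist_le w (Walk.fst_mem_support_of_mem_edges w he)
  · exact hw ▸ aux_dist_add_dist_le w (Walk.snd_mem_support_of_mem_edges w he)

/-- Four point condition for tree metrics. -/
private lemma aux_fpc (hT : T.IsTree) (a b c d : W) :
    T.dist a b + T.dist c d ≤ max (T.dist a c + T.dist b d) (T.dist a d + T.dist b c) := by
  generalize hn : T.dist a b = n
  induction n using Nat.strong_induction_on generalizing a b c d with
  | _ n ih =>
    rcases Nat.eq_zero_or_pos n with rfl | hpos
    · have hab : a = b := hT.1.dist_eq_zero_iff.mp hn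
      subst hab
      refine le_max_of_le_left ?_
      have t1 : T.dist c d ≤ T.dist c a + T.dist a d := hT.1.dist_triangle
      have e1 : T.dist c a = T.dist a c := SimpleGraph.dist_comm
      omega
    · obtain ⟨p, hp, hl⟩ := hT.1.exists_path_of_dist a b
      rw [hn] at hl
      cases p with
      | nil => simp at hl; omega
      | @cons _ a' _ h1 q =>
        rw [Walk.cons_isPath_iff] at hp
        have hq_edge : s(a, a') ∉ q.edges := fun he =>
          hp.2 (Walk.fst_mem_support_of_mem_edges q he)
        rw [Walk.length_cons] at hl
        have h2 : T.dist a' b ≤ n - 1 := by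
          have := SimpleGraph.dist_le q; omega
        have h3 : T.dist a b ≤ 1 + T.dist a' b := by
          have t := hT.1.dist_triangle (u := a) (v := a') (w := b)
          have t2 : T.dist a a' = 1 := SimpleGraph.dist_eq_one_iff_adj.mpr h1
          omega
        have hdab : T.dist a' b = n - 1 := by omega
        rcases aux_side hT h1 c with ⟨wc, hwc⟩ | ⟨wc, hwc⟩
        · -- c on the `a` side: geodesic from c to b goes through a
          have hc := (aux_cross hT h1 wc hwc q hq_edge).1
          have t1 : T.dist c d ≤ T.dist c a + T.dist a d := hT.1.dist_triangle
          have e1 : T.dist c b = T.dist b c := SimpleGraph.dist_comm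
          have e2 : T.dist c a = T.dist a c := SimpleGraph.dist_comm
          refine le_max_of_le_right ?_
          omega
        · rcases aux_side hT h1 d with ⟨wd, hwd⟩ | ⟨wd, hwd⟩
          · -- d on the `a` side
            have hd2 := (aux_cross hT h1 wd hwd q hq_edge).1
            have t1 : T.dist c d ≤ T.dist c a + T.dist a d := hT.1.dist_triangle
            have e1 : T.dist d b = T.dist b d := SimpleGraph.dist_comm
            have e2 : T.dist d a = T.dist a d := SimpleGraph.dist_comm
            have e3 : T.dist c a = T.dist a c := SimpleGraph.dist_comm
            refine le_max_of_le_left ?_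
            omega
          · -- c and d both on the `a'` side
            have hnil : s(a, a') ∉ (Walk.nil : T.Walk a a).edges := by simp
            have hc := (aux_cross hT h1 Walk.nil hnil wc hwc).2
            have hd2 := (aux_cross hT h1 Walk.nil hnil wd hwd).2
            have t2 : T.dist a a' = 1 := SimpleGraph.dist_eq_one_iff_adj.mpr h1
            have tc : T.dist a c ≤ T.dist a a' + T.dist a' c := hT.1.dist_triangle
            have td : T.dist a d ≤ T.dist a a' + T.dist a' d := hT.1.dist_triangle
            have e1 : T.dist a a = 0 := SimpleGraph.dist_self
            have ihh := ih (n - 1) (by omega) a' b c d hdab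
            rcases le_max_iff.mp ihh with hh | hh
            · refine le_max_of_le_left ?_; omega
            · refine le_max_of_le_right ?_; omega

end Aux

/-- Every `k`-leaf power is chordal: it contains no induced cycle of length at least 4. -/
theorem leafPower_chordal {V : Type*} [Fintype V] (G : SimpleGraph V) (k : ℕ)
    (h : ∃ (W : Type) (_ : Fintype W) (T : SimpleGraph W) (τ : V → W), IsLeafRoot G T τ k) :
    ∀ n : ℕ, 4 ≤ n → IsEmpty (SimpleGraph.cycleGraph n ↪g G) := by
  obtain ⟨W, _, T, τ, hTree, hτinj, -, -, hdist⟩ := h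
  intro n hn
  refine ⟨fun f => ?_⟩
  have hnpos : 0 < n := by omega
  set F : ℕ → Fin n := fun i => ⟨i % n, Nat.mod_lt _ hnpos⟩ with hF
  set D : ℕ → ℕ → ℕ := fun i j => T.dist (τ (f (F i))) (τ (f (F j))) with hD
  -- adjacency characterization
  have hadj_iff : ∀ i j : ℕ, (SimpleGraph.cycleGraph n).Adj (F i) (F j) ↔
      ((n - j % n) + i % n) % n = 1 ∨ ((n - i % n) + j % n) % n = 1 := by
    intro i j
    rw [SimpleGraph.cycleGraph_adj', Fin.sub_def, Fin.sub_def]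
  have hmod : ∀ m : ℕ, 1 ≤ m → m ≤ 2 * n - 1 → (m % n = 1 ↔ (m = 1 ∨ m = n + 1)) := by
    intro m h1 h2
    rcases lt_or_ge m n with hm | hm
    · rw [Nat.mod_eq_of_lt hm]; omega
    · rw [Nat.mod_eq_sub_mod hm, Nat.mod_eq_of_lt (by omega)]; omega
  have hcond : ∀ i j : ℕ, i < n → j < n →
      ((((n - j % n) + i % n) % n = 1 ∨ ((n - i % n) + j % n) % n = 1) ↔
        (j + 1 = i ∨ i + 1 = j ∨ (i = 0 ∧ j = n - 1) ∨ (j = 0 ∧ i = n - 1))) := by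
    intro i j hi hj
    have ei : i % n = i := Nat.mod_eq_of_lt hi
    have ej : j % n = j := Nat.mod_eq_of_lt hj
    rw [ei, ej]
    have h1 := hmod ((n - j) + i) (by omega) (by omega)
    have h2 := hmod ((n - i) + j) (by omega) (by omega)
    omega
  have hAdjD : ∀ i j : ℕ, i < n → j < n →
      (j + 1 = i ∨ i + 1 = j ∨ (i = 0 ∧ j = n - 1) ∨ (j = 0 ∧ i = n - 1)) → D i j ≤ k := by
    intro i j hi hj hij
    have hadj : (SimpleGraph.cycleGraph n).Adj (F i) (F j) :=
      (hadj_iff i j).mpr ((hcond i j hi hj).mpr hij)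
    have hGadj : G.Adj (f (F i)) (f (F j)) := f.map_adj_iff.mpr hadj
    have hne : f (F i) ≠ f (F j) := fun hh => hadj.ne (f.injective hh)
    exact (hdist (f (F i)) (f (F j)) hne).mp hGadj
  have hNonD : ∀ i j : ℕ, i < n → j < n → i ≠ j →
      ¬(j + 1 = i ∨ i + 1 = j ∨ (i = 0 ∧ j = n - 1) ∨ (j = 0 ∧ i = n - 1)) → k + 1 ≤ D i j := by
    intro i j hi hj hij hnadj
    have hFne : F i ≠ F j := fun hh => by
      have : i % n = j % n := by simpa [hF, Fin.ext_iff] using hh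
      rw [Nat.mod_eq_of_lt hi, Nat.mod_eq_of_lt hj] at this
      exact hij this
    have hne : f (F i) ≠ f (F j) := fun hh => hFne (f.injective hh)
    have hnGadj : ¬ G.Adj (f (F i)) (f (F j)) := fun hh =>
      hnadj ((hcond i j hi hj).mp ((hadj_iff i j).mp (f.map_adj_iff.mp hh)))
    have hgt : ¬ (D i j ≤ k) := (hdist (f (F i)) (f (F j)) hne).not.mp hnGadj
    omega
  -- step inequality from the four point condition
  have key : ∀ j : ℕ, 2 ≤ j → j + 1 ≤ n - 1 → D 0 j + D 1 (j + 1) ≤ D 0 (j + 1) + D 1 j := by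
    intro j hj2 hj1
    have e1 : j % n = j := Nat.mod_eq_of_lt (by omega)
    have e2 : (j + 1) % n = j + 1 := Nat.mod_eq_of_lt (by omega)
    have fpc : D 0 j + D 1 (j + 1) ≤ max (D 0 1 + D j (j + 1)) (D 0 (j + 1) + D j 1) :=
      aux_fpc hTree (τ (f (F 0))) (τ (f (F j))) (τ (f (F 1))) (τ (f (F (j + 1))))
    have b1 : D 0 1 ≤ k := hAdjD 0 1 (by omega) (by omega) (by omega)
    have b2 : D j (j + 1) ≤ k := hAdjD j (j + 1) (by omega) (by omega) (by omega)
    have b3 : k + 1 ≤ D 0 j := hNonD 0 j (by omega) (by omega) (by omega) (by omega)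
    have b4 : k + 1 ≤ D 1 (j + 1) := hNonD 1 (j + 1) (by omega) (by omega) (by omega) (by omega)
    have ecomm : D j 1 = D 1 j := SimpleGraph.dist_comm
    rcases le_max_iff.mp fpc with hh | hh <;> omega
  -- telescoping
  have chain : ∀ j : ℕ, 2 ≤ j → j ≤ n - 1 → D 0 2 + D 1 j ≤ D 0 j + D 1 2 := by
    intro j hj
    induction j, hj using Nat.le_induction with
    | base => intro _; omega
    | succ j hj ihj =>
      intro hj1
      have hk := key j hj (by omega)
      have := ihj (by omega)
      omega
  have c1 := chain (n - 1) (by omega) le_rfl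
  have b5 : k + 1 ≤ D 0 2 := hNonD 0 2 (by omega) (by omega) (by omega) (by omega)
  have b6 : k + 1 ≤ D 1 (n - 1) := hNonD 1 (n - 1) (by omega) (by omega) (by omega) (by omega)
  have b7 : D 0 (n - 1) ≤ k := hAdjD 0 (n - 1) (by omega) (by omega) (by omega)
  have b8 : D 1 2 ≤ k := hAdjD 1 2 (by omega) (by omega) (by omega)
  omega
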